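/- Let G be a simple graph on a finite vertex type V, let C ⊆ V, and let k, t ∈ ℕ. Let m : V → ℕ be defined by m v = 1 if v ∈ C and m v = k + 1 if v ∉ C, and let G' = G[m] be the blow-up. Then there exists a set B ⊆ C with |B| ≤ k such that every clique of G of size at least t intersects B, if and only if there exists a set B' of vertices of G' with |B'| ≤ k such that every clique of G' of size at least t intersects B'. -/

import Mathlib

open Classical in
/-- The blow-up `G[m]` of a simple graph `G` along `m : V → ℕ`: the vertex type is
`Σ v : V, Fin (m v)`, and `⟨u, i⟩` is adjacent to `⟨v, j⟩` iff `u` and `v` are adjacent in `G`. -/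
def SimpleGraph.blowup {V : Type*} (G : SimpleGraph V) (m : V → ℕ) :
    SimpleGraph (Σ v : V, Fin (m v)) where
  Adj a b := G.Adj a.1 b.1
  symm := ⟨fun _ _ h => G.adj_symm h⟩
  loopless := ⟨fun _ h => G.irrefl h⟩

open Classical in
theorem clique_interdiction_blowup {V : Type*} [Fintype V] (G : SimpleGraph V)
    (C : Set V) (k t : ℕ) (m : V → ℕ) (hm : ∀ v : V, m v = if v ∈ C then 1 else k + 1) :
    (∃ B : Set V, B ⊆ C ∧ B.ncard ≤ k ∧
        ∀ K : Set V, G.IsClique K → t ≤ K.ncard → (K ∩ B).Nonempty) ↔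
      (∃ B' : Set (Σ v : V, Fin (m v)), B'.ncard ≤ k ∧
        ∀ K' : Set (Σ v : V, Fin (m v)),
          (G.blowup m).IsClique K' → t ≤ K'.ncard → (K' ∩ B').Nonempty) := by
  constructor
  · rintro ⟨B, hBC, hBk, hB⟩
    refine ⟨Sigma.fst ⁻¹' B, ?_, ?_⟩
    · have hinj : Set.InjOn (Sigma.fst : (Σ v : V, Fin (m v)) → V) (Sigma.fst ⁻¹' B) := by
        rintro ⟨u, i⟩ hu ⟨v, j⟩ hv (h : u = v)
        subst h
        have h1 : m u = 1 := by rw [hm]; simp [hBC hu]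
        have hi := i.isLt
        have hj := j.isLt
        have : i = j := by apply Fin.ext; omega
        rw [this]
      calc (Sigma.fst ⁻¹' B).ncard = (Sigma.fst '' (Sigma.fst ⁻¹' B)).ncard :=
            (Set.ncard_image_of_injOn hinj).symm
        _ ≤ B.ncard := Set.ncard_le_ncard (Set.image_preimage_subset _ _) B.toFinite
        _ ≤ k := hBk
    · intro K' hK' hK't
      have hfinj : Set.InjOn Sigma.fst K' := by
        intro a ha b hb hab
        by_contra hne
        have h2 : G.Adj a.1 b.1 := hK' ha hb hne
        rw [hab] at h2
        exact G.irrefl h2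
      have hclique : G.IsClique (Sigma.fst '' K') := by
        rintro u ⟨a, ha, rfl⟩ v ⟨b, hb, rfl⟩ hne
        have hab : a ≠ b := fun h => hne (by rw [h])
        exact hK' ha hb hab
      have hcard : t ≤ (Sigma.fst '' K').ncard := by
        rw [Set.ncard_image_of_injOn hfinj]; exact hK't
      obtain ⟨v, hvK, hvB⟩ := hB _ hclique hcard
      obtain ⟨a, haK', rfl⟩ := hvK
      exact ⟨a, haK', hvB⟩
  · rintro ⟨B', hB'k, hB'⟩
    refine ⟨C ∩ (Sigma.fst '' B'), Set.inter_subset_left, ?_, ?_⟩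
    · calc (C ∩ Sigma.fst '' B').ncard ≤ (Sigma.fst '' B').ncard :=
            Set.ncard_le_ncard Set.inter_subset_right (Set.toFinite _)
        _ ≤ B'.ncard := Set.ncard_image_le B'.toFinite
        _ ≤ k := hB'k
    · intro K hK hKt
      have hpos : ∀ v : V, 0 < m v := by intro v; rw [hm v]; split <;> omega
      set f : ∀ v : V, Fin (m v) := fun v =>
        if h : ∃ i : Fin (m v), (⟨v, i⟩ : Σ v, Fin (m v)) ∉ B' then h.choose
        else ⟨0, hpos v⟩ with hf
      have hinjf : Function.Injective (fun v => (⟨v, f v⟩ : Σ v, Fin (m v))) :=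
        fun u v h => congrArg Sigma.fst h
      have hK'clique : (G.blowup m).IsClique ((fun v => (⟨v, f v⟩ : Σ v, Fin (m v))) '' K) := by
        rintro a ⟨u, hu, rfl⟩ b ⟨v, hv, rfl⟩ hne
        have huv : u ≠ v := fun h => hne (by subst h; rfl)
        exact hK hu hv huv
      have hcd : t ≤ ((fun v => (⟨v, f v⟩ : Σ v, Fin (m v))) '' K).ncard := by
        rw [Set.ncard_image_of_injective _ hinjf]; exact hKt
      obtain ⟨a, haK', haB'⟩ := hB' _ hK'clique hcd
      obtain ⟨v, hvK, rfl⟩ := haK'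
      refine ⟨v, hvK, ?_, ⟨⟨v, f v⟩, haB', rfl⟩⟩
      by_contra hvC
      have hall : ∀ i : Fin (m v), (⟨v, i⟩ : Σ v, Fin (m v)) ∈ B' := by
        by_contra hex
        push_neg at hex
        obtain ⟨i, hi⟩ := hex
        have hex' : ∃ i : Fin (m v), (⟨v, i⟩ : Σ v, Fin (m v)) ∉ B' := ⟨i, hi⟩
        have hfv : f v = hex'.choose := by rw [hf]; exact dif_pos hex'
        exact hex'.choose_spec (hfv ▸ haB')
      have hsub : (fun i : Fin (m v) => (⟨v, i⟩ : Σ v, Fin (m v))) '' Set.univ ⊆ B' := by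
        rintro _ ⟨i, _, rfl⟩; exact hall i
      have hle : m v ≤ B'.ncard := by
        have h1 : ((fun i : Fin (m v) => (⟨v, i⟩ : Σ v, Fin (m v))) '' Set.univ).ncard = m v := by
          show ((Sigma.mk v) '' Set.univ).ncard = m v
          rw [Set.ncard_image_of_injective _ sigma_mk_injective, Set.ncard_univ,
            Nat.card_eq_fintype_card, Fintype.card_fin]
        calc m v = _ := h1.symm
          _ ≤ B'.ncard := Set.ncard_le_ncard hsub B'.toFinite
      rw [hm v, if_neg hvC] at hle
      omega
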